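/- Let G be a graph on n vertices, v a vertex with neighborhood N_G(v), A ∈ S(G−v) a witness for mr(G−v), and B the bordered matrix [[A, Aw],[wᵀA, wᵀAw]]. Then B is a witness of mr(G) if and only if (1) w lies in the null space of the submatrix A[L_v \ N_G(v), L_v] of A consisting of the rows indexed by non-neighbors of v, and (2) (Aw)_i ≠ 0 for every i ∈ N_G(v). -/

import Mathlib

open Matrix

/-- The set of real symmetric matrices whose off-diagonal zero/nonzero
pattern matches the edges of the graph `G`. -/
def SG {V : Type*} (G : SimpleGraph V) : Set (Matrix V V ℝ) :=
  {A | A.IsSymm ∧ ∀ i j : V, i ≠ j → (A i j ≠ 0 ↔ G.Adj i j)}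

/-- Minimum rank of a graph. -/
noncomputable def minRank {V : Type*} [Fintype V] (G : SimpleGraph V) : ℕ :=
  sInf {r | ∃ A ∈ SG G, A.rank = r}

/-- The graph obtained from `G` by deleting the vertex `v`. -/
def deleteVert {V : Type*} (G : SimpleGraph V) (v : V) :
    SimpleGraph {x : V // x ≠ v} where
  Adj a b := G.Adj a.val b.val
  symm := ⟨fun _ _ h => G.symm.symm _ _ h⟩
  loopless := ⟨fun a h => G.loopless.irrefl a.val h⟩

noncomputable instance {V : Type*} [Finite V] (v : V) :
    Fintype {x : V // x ≠ v} := Fintype.ofFinite _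

/-- The bordered matrix `B = [[A, Aw],[wᵀA, wᵀAw]]`, with rows and columns
indexed by `V`; the new row/column is the one indexed by `v`. -/
noncomputable def border {V : Type*} [Fintype V] [DecidableEq V] (v : V)
    (A : Matrix {x : V // x ≠ v} {x : V // x ≠ v} ℝ) (w : {x : V // x ≠ v} → ℝ) :
    Matrix V V ℝ :=
  Matrix.of fun i j =>
    if hi : i = v then
      (if hj : j = v then w ⬝ᵥ (A *ᵥ w) else (w ᵥ* A) ⟨j, hj⟩)
    else
      (if hj : j = v then (A *ᵥ w) ⟨i, hi⟩ else A ⟨i, hi⟩ ⟨j, hj⟩)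

set_option maxHeartbeats 1000000 in
lemma rank_submatrix_le'' {m n p q : Type*} [Fintype m] [Fintype n] [Fintype p] [Fintype q]
    [DecidableEq m] [DecidableEq n]
    (B : Matrix m n ℝ) (f : p → m) (g : q → n) :
    (B.submatrix f g).rank ≤ B.rank := by
  classical
  have h : B.submatrix f g =
      (Matrix.of fun i k => if f i = k then (1:ℝ) else 0) * B *
      (Matrix.of fun k j => if k = g j then (1:ℝ) else 0) := by
    ext i j
    simp [Matrix.mul_apply, ite_mul, mul_ite, one_mul, zero_mul, mul_one, mul_zero,
      Finset.sum_ite_eq, Finset.sum_ite_eq', Finset.mul_sum]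
  calc (B.submatrix f g).rank
      = _ := by rw [h]
    _ ≤ ((Matrix.of fun i k => if f i = k then (1:ℝ) else 0) * B).rank :=
        Matrix.rank_mul_le_left _ _
    _ ≤ B.rank := Matrix.rank_mul_le_right _ _

lemma SG_nonempty {V : Type*} [Fintype V] (G : SimpleGraph V) :
    ∃ M : Matrix V V ℝ, M ∈ SG G := by
  classical
  refine ⟨Matrix.of fun i j => if G.Adj i j then (1:ℝ) else 0, ?_, ?_⟩
  · ext i j
    simp only [Matrix.transpose_apply, Matrix.of_apply]
    rw [G.adj_comm]
  · intro i j hij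
    by_cases h : G.Adj i j <;> simp [h]

lemma minRank_deleteVert_le {V : Type*} [Fintype V] [DecidableEq V]
    (G : SimpleGraph V) (v : V) :
    minRank (deleteVert G v) ≤ minRank G := by
  classical
  obtain ⟨M, hM⟩ := SG_nonempty G
  have hne : {r | ∃ A ∈ SG G, A.rank = r}.Nonempty := ⟨M.rank, M, hM, rfl⟩
  have hmem := Nat.sInf_mem hne
  obtain ⟨A', hA', hr⟩ := hmem
  set A'' := A'.submatrix (fun x : {x : V // x ≠ v} => x.val)
      (fun x : {x : V // x ≠ v} => x.val) with hA''def
  have hmemSG : A'' ∈ SG (deleteVert G v) := by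
    constructor
    · ext i j
      exact hA'.1.apply i.val j.val
    · intro i j hij
      have : i.val ≠ j.val := fun h => hij (Subtype.ext h)
      exact hA'.2 i.val j.val this
  have h1 : minRank (deleteVert G v) ≤ A''.rank :=
    Nat.sInf_le ⟨A'', hmemSG, rfl⟩
  have h2 : A''.rank ≤ A'.rank := rank_submatrix_le'' _ _ _
  calc minRank (deleteVert G v) ≤ A''.rank := h1
    _ ≤ A'.rank := h2
    _ = minRank G := hr

set_option maxHeartbeats 1000000 in
lemma border_rank {V : Type*} [Fintype V] [DecidableEq V] (v : V)
    (A : Matrix {x : V // x ≠ v} {x : V // x ≠ v} ℝ) (w : {x : V // x ≠ v} → ℝ) :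
    (border v A w).rank = A.rank := by
  classical
  apply le_antisymm
  · -- B = E' * A * E
    have h : border v A w =
        (Matrix.of fun (i : V) (k : {x : V // x ≠ v}) =>
          if hi : i = v then w k else if (⟨i, hi⟩ : {x : V // x ≠ v}) = k then (1:ℝ) else 0) *
        A *
        (Matrix.of fun (k : {x : V // x ≠ v}) (j : V) =>
          if hj : j = v then w k else if k = (⟨j, hj⟩ : {x : V // x ≠ v}) then (1:ℝ) else 0) := by
      ext i j
      by_cases hi : i = v <;> by_cases hj : j = v
      · simp only [border, Matrix.of_apply, dif_pos hi, dif_pos hj, Matrix.mul_apply]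
        rw [Matrix.dotProduct_mulVec]
        simp [Matrix.vecMul, dotProduct, Finset.sum_mul]
      · simp [border, hi, hj, Matrix.mul_apply, Matrix.vecMul, dotProduct,
          ite_mul, mul_ite, one_mul, zero_mul, mul_one, mul_zero,
          Finset.sum_ite_eq, Finset.sum_ite_eq']
      · simp [border, hi, hj, Matrix.mul_apply, Matrix.mulVec, dotProduct,
          ite_mul, mul_ite, one_mul, zero_mul, mul_one, mul_zero,
          Finset.sum_ite_eq, Finset.sum_ite_eq']
      · simp [border, hi, hj, Matrix.mul_apply,
          ite_mul, mul_ite, one_mul, zero_mul, mul_one, mul_zero,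
          Finset.sum_ite_eq, Finset.sum_ite_eq']
    calc (border v A w).rank = _ := by rw [h]
      _ ≤ ((Matrix.of fun (i : V) (k : {x : V // x ≠ v}) =>
          if hi : i = v then w k else if (⟨i, hi⟩ : {x : V // x ≠ v}) = k then (1:ℝ) else 0) *
          A).rank := Matrix.rank_mul_le_left _ _
      _ ≤ A.rank := Matrix.rank_mul_le_right _ _
  · have h : A = (border v A w).submatrix (fun x : {x : V // x ≠ v} => x.val)
        (fun x : {x : V // x ≠ v} => x.val) := by
      ext i j
      simp [border, i.prop, j.prop]
    conv_lhs => rw [h]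
    exact rank_submatrix_le'' _ _ _

/-- The bordered matrix `B` is a witness of `mr(G)` if and only if `w` lies in
the null space of the rows of `A` indexed by non-neighbors of `v`, and
`(Aw)ᵢ ≠ 0` for every neighbor `i` of `v`. -/
theorem border_witness_iff {V : Type*} [Fintype V] [DecidableEq V]
    (G : SimpleGraph V) (v : V)
    (A : Matrix {x : V // x ≠ v} {x : V // x ≠ v} ℝ)
    (hA : A ∈ SG (deleteVert G v)) (hrank : A.rank = minRank (deleteVert G v))
    (w : {x : V // x ≠ v} → ℝ) :
    (border v A w ∈ SG G ∧ (border v A w).rank = minRank G) ↔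
      ((∀ x : {x : V // x ≠ v}, ¬ G.Adj v x.val → (A *ᵥ w) x = 0) ∧
        (∀ x : {x : V // x ≠ v}, G.Adj v x.val → (A *ᵥ w) x ≠ 0)) := by
  classical
  have hvm : ∀ x : {x : V // x ≠ v}, (w ᵥ* A) x = (A *ᵥ w) x := by
    intro x
    rw [← Matrix.mulVec_transpose, hA.1]
  constructor
  · rintro ⟨⟨hsymm, hpat⟩, -⟩
    have key : ∀ x : {x : V // x ≠ v}, ((A *ᵥ w) x ≠ 0 ↔ G.Adj x.val v) := by
      intro x
      have := hpat x.val v x.prop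
      simpa [border, x.prop] using this
    constructor
    · intro x hx
      by_contra h
      exact hx (G.adj_symm ((key x).mp h))
    · intro x hx
      exact (key x).mpr (G.adj_symm hx)
  · rintro ⟨h1, h2⟩
    have hmemSG : border v A w ∈ SG G := by
      constructor
      · ext i j
        simp only [Matrix.transpose_apply]
        by_cases hi : i = v <;> by_cases hj : j = v <;>
          simp [border, hi, hj, hvm]
        exact hA.1.apply ⟨i, hi⟩ ⟨j, hj⟩
      · intro i j hij
        by_cases hi : i = v
        · have hj : j ≠ v := fun h => hij (hi.trans h.symm)
          simp only [border, Matrix.of_apply, dif_pos hi, dif_neg hj, hvm]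
          rw [hi]
          constructor
          · intro h
            by_contra hadj
            exact h (h1 ⟨j, hj⟩ hadj)
          · intro h
            exact h2 ⟨j, hj⟩ h
        · by_cases hj : j = v
          · subst hj
            simp only [border, Matrix.of_apply, dif_neg hi, dif_pos rfl]
            rw [G.adj_comm]
            constructor
            · intro h
              by_contra hadj
              exact h (h1 ⟨i, hi⟩ hadj)
            · intro h
              exact h2 ⟨i, hi⟩ h
          · have : (⟨i, hi⟩ : {x : V // x ≠ v}) ≠ ⟨j, hj⟩ := fun h =>
              hij (congrArg Subtype.val h)
            simpa [border, hi, hj, deleteVert] using hA.2 ⟨i, hi⟩ ⟨j, hj⟩ this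
    refine ⟨hmemSG, ?_⟩
    have hle : minRank G ≤ (border v A w).rank :=
      Nat.sInf_le ⟨border v A w, hmemSG, rfl⟩
    have hge : (border v A w).rank ≤ minRank G := by
      rw [border_rank, hrank]
      exact minRank_deleteVert_le G v
    exact le_antisymm hge hle
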